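/- Classical achievability of the CUSUM trade-off: Assume supp q ⊆ supp p, D := D(q‖p) > 0, let α ∈ (0,1), and set h := log(1/α). Then the CUSUM stopping time T* with threshold h satisfies E_∞[T*] ≥ 1/α, and for every ν ≥ 0 and every x^ν ∈ X^ν with P_∞(T* > ν, X^ν = x^ν) > 0, E_ν[T* − ν | T* > ν, X^ν = x^ν] ≤ (log(1/α) + C)/D, where C := max_{x ∈ supp q} log(q(x)/p(x)). -/

import Mathlib

open MeasureTheory ProbabilityTheory Real Filter
open scoped ENNReal NNReal Classical
set_option linter.unusedSectionVars false
set_option linter.unusedVariables false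

noncomputable section

namespace QCPD

variable {X : Type*}

/-- The measure on `X` induced by a probability mass function `p`. -/
def pmfMeasure [Fintype X] [MeasurableSpace X] (p : X → ℝ) : Measure X :=
  ∑ x : X, ENNReal.ofReal (p x) • Measure.dirac x

/-- `p` is a probability mass function on the finite type `X`. -/
def IsPMF [Fintype X] (p : X → ℝ) : Prop := (∀ x, 0 ≤ p x) ∧ ∑ x, p x = 1

/-- Under `P`, the coordinates of `Ω = ℕ → X` are independent and the `i`-th
coordinate (representing `X_{i+1}`) has law given by the pmf `r i`.  For i.i.d.
pmfs this characterizes the infinite product measure. -/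
def HasLaw [Fintype X] [MeasurableSpace X] (P : Measure (ℕ → X)) (r : ℕ → X → ℝ) : Prop :=
  iIndepFun (fun i (ω : ℕ → X) => ω i) P ∧
    ∀ i, P.map (fun ω => ω i) = pmfMeasure (r i)

/-- The log-likelihood ratio `log (q x / p x)`, valued in the extended reals,
with the conventions `log 0 = −∞` (and `log ∞ = ∞`). -/
def llr (p q : X → ℝ) (x : X) : EReal :=
  ENNReal.log (ENNReal.ofReal (q x) / ENNReal.ofReal (p x))

/-- `S_n = ∑_{i=1}^n Z_i` where `Z_i = log (q (X_i) / p (X_i))`; the `i`-th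
coordinate of `ω` represents `X_{i+1}`. -/
def llrSum (p q : X → ℝ) (n : ℕ) (ω : ℕ → X) : EReal :=
  ∑ i ∈ Finset.range n, llr p q (ω i)

/-- `T₁ = inf {n ≥ 1 : S_n ≥ h}`, with value `∞` if no such `n` exists. -/
def T1 (p q : X → ℝ) (h : ℝ) (ω : ℕ → X) : ℕ∞ :=
  sInf ((↑) '' {n : ℕ | 1 ≤ n ∧ (h : EReal) ≤ llrSum p q n ω})

/-- Kullback–Leibler divergence `D(q‖p) = ∑_{x ∈ supp q} q x · log (q x / p x)`. -/
def KL [Fintype X] (q p : X → ℝ) : ℝ :=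
  ∑ x ∈ Finset.univ.filter (fun x => 0 < q x), q x * Real.log (q x / p x)

/-- `T_j` (here `j : ℕ` represents the 1-indexed start `j+1`, so all starts
`j ≥ 1` are covered): the first time `n ≥ j+1` such that
`∑_{i=j+1}^n log (q (X_i) / p (X_i)) ≥ h`, and `∞` if there is no such `n`. -/
def Tj (p q : X → ℝ) (h : ℝ) (j : ℕ) (ω : ℕ → X) : ℕ∞ :=
  sInf ((↑) '' {n : ℕ | j + 1 ≤ n ∧ (h : EReal) ≤ ∑ i ∈ Finset.Ico j n, llr p q (ω i)})

/-- The CUSUM stopping time `T* = inf_{j ≥ 1} T_j` with threshold `h`. -/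
def Tstar (p q : X → ℝ) (h : ℝ) (ω : ℕ → X) : ℕ∞ := ⨅ j : ℕ, Tj p q h j ω

section Infra

variable [Fintype X] [Nonempty X] [MeasurableSpace X] [DiscreteMeasurableSpace X]

def restS (S : Finset ℕ) (ω : ℕ → X) : S → X := fun i => ω i

def extS (S : Finset ℕ) (v : S → X) : ℕ → X :=
  fun i => if h : i ∈ S then v ⟨i, h⟩ else Classical.arbitrary X

lemma restS_extS (S : Finset ℕ) (ω : ℕ → X) (i : ℕ) (hi : i ∈ S) :
    extS S (restS S ω) i = ω i := by simp [extS, restS, hi]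

lemma measurable_restS (S : Finset ℕ) : Measurable (restS (X := X) S) :=
  measurable_pi_lambda _ fun i => measurable_pi_apply _

lemma factor_eq {β : Type*} (S : Finset ℕ) (f : (ℕ → X) → β)
    (hf : ∀ ω ω', (∀ i ∈ S, ω i = ω' i) → f ω = f ω') :
    f = (fun v => f (extS S v)) ∘ restS S := by
  funext ω
  exact hf ω (extS S (restS S ω)) (fun i hi => (restS_extS S ω i hi).symm)

lemma measurable_of_coords {β : Type*} [MeasurableSpace β] (S : Finset ℕ) (f : (ℕ → X) → β)
    (hf : ∀ ω ω', (∀ i ∈ S, ω i = ω' i) → f ω = f ω') : Measurable f := by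
  rw [factor_eq S f hf]
  exact Measurable.of_discrete.comp (measurable_restS S)

lemma measurableSet_of_coords (S : Finset ℕ) (A : Set (ℕ → X))
    (hA : ∀ ω ω', (∀ i ∈ S, ω i = ω' i) → (ω ∈ A ↔ ω' ∈ A)) : MeasurableSet A := by
  have hA' : A = restS S ⁻¹' {v | extS S v ∈ A} := by
    ext ω
    exact hA ω (extS S (restS S ω)) fun i hi => (restS_extS S ω i hi).symm
  rw [hA']
  exact measurable_restS S MeasurableSet.of_discrete

lemma integrable_of_coords (S : Finset ℕ) (f : (ℕ → X) → ℝ)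
    (hf : ∀ ω ω', (∀ i ∈ S, ω i = ω' i) → f ω = f ω')
    (μ : Measure (ℕ → X)) [IsProbabilityMeasure μ] : Integrable f μ := by
  have hmeas : Measurable f := measurable_of_coords S f hf
  refine (integrable_const (∑ v : S → X, ‖f (extS S v)‖)).mono'
    hmeas.aestronglyMeasurable (Filter.Eventually.of_forall fun ω => ?_)
  have hfω : f ω = f (extS S (restS S ω)) := hf _ _ fun i hi => (restS_extS S ω i hi).symm
  rw [hfω]
  exact Finset.single_le_sum (f := fun v => ‖f (extS S v)‖)
    (fun v _ => norm_nonneg _) (Finset.mem_univ _)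

lemma indepFun_of_coords {β γ : Type*} [MeasurableSpace β] [MeasurableSpace γ]
    (P : Measure (ℕ → X)) [IsProbabilityMeasure P]
    (hP : iIndepFun (fun i (ω : ℕ → X) => ω i) P)
    (S T : Finset ℕ) (hST : Disjoint S T) (f : (ℕ → X) → β) (g : (ℕ → X) → γ)
    (hfS : ∀ ω ω', (∀ i ∈ S, ω i = ω' i) → f ω = f ω')
    (hgT : ∀ ω ω', (∀ i ∈ T, ω i = ω' i) → g ω = g ω') :
    IndepFun f g P := by
  have hbase := hP.indepFun_finset S T hST (fun i => measurable_pi_apply i)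
  have hcomp := hbase.comp (φ := fun v : S → X => f (extS S v))
    (ψ := fun v : T → X => g (extS T v)) Measurable.of_discrete Measurable.of_discrete
  have h1 : f = (fun v : S → X => f (extS S v)) ∘ (fun (a : ℕ → X) (i : S) => a i) :=
    factor_eq S f hfS
  have h2 : g = (fun v : T → X => g (extS T v)) ∘ (fun (a : ℕ → X) (i : T) => a i) :=
    factor_eq T g hgT
  rw [h1, h2]
  exact hcomp

lemma integral_mul_of_coords (P : Measure (ℕ → X)) [IsProbabilityMeasure P]
    (hP : iIndepFun (fun i (ω : ℕ → X) => ω i) P)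
    (S T : Finset ℕ) (hST : Disjoint S T) (f g : (ℕ → X) → ℝ)
    (hfS : ∀ ω ω', (∀ i ∈ S, ω i = ω' i) → f ω = f ω')
    (hgT : ∀ ω ω', (∀ i ∈ T, ω i = ω' i) → g ω = g ω') :
    ∫ ω, f ω * g ω ∂P = (∫ ω, f ω ∂P) * ∫ ω, g ω ∂P := by
  have hcomp : IndepFun f g P := indepFun_of_coords P hP S T hST f g hfS hgT
  simpa [Pi.mul_apply] using hcomp.integral_mul_eq_mul_integral
    (integrable_of_coords S f hfS P).aestronglyMeasurable (integrable_of_coords T g hgT P).aestronglyMeasurable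

lemma pmfMeasure_apply (r : X → ℝ) (B : Set X) :
    pmfMeasure r B = ∑ x, (if x ∈ B then ENNReal.ofReal (r x) else 0) := by
  unfold pmfMeasure
  rw [Measure.coe_finset_sum]
  simp only [Finset.sum_apply, Measure.smul_apply,
    Measure.dirac_apply' _ (MeasurableSet.of_discrete (s := B)), smul_eq_mul]
  refine Finset.sum_congr rfl fun x _ => ?_
  by_cases hx : x ∈ B <;> simp [Set.indicator, hx]

lemma integrable_fintype (μ : Measure X) [IsFiniteMeasure μ] (φ : X → ℝ) : Integrable φ μ := by
  refine (integrable_const (∑ x, ‖φ x‖)).mono'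
    (Measurable.of_discrete (f := φ)).aestronglyMeasurable (Filter.Eventually.of_forall fun a => ?_)
  exact Finset.single_le_sum (f := fun x => ‖φ x‖) (fun x _ => norm_nonneg _) (Finset.mem_univ _)

lemma integral_pmfMeasure (r : X → ℝ) (hr : ∀ x, 0 ≤ r x) (φ : X → ℝ) :
    ∫ x, φ x ∂(pmfMeasure r) = ∑ x, r x * φ x := by
  unfold pmfMeasure
  rw [integral_finset_sum_measure ?hint]
  case hint =>
    intro x _
    exact (integrable_fintype _ φ).smul_measure ENNReal.ofReal_ne_top
  refine Finset.sum_congr rfl fun x _ => ?_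
  rw [integral_smul_measure, integral_dirac, smul_eq_mul, ENNReal.toReal_ofReal (hr x)]

lemma integral_coord (P : Measure (ℕ → X)) [IsProbabilityMeasure P] (r : X → ℝ)
    (hr : ∀ x, 0 ≤ r x) (i : ℕ)
    (hmap : P.map (fun ω : ℕ → X => ω i) = pmfMeasure r) (φ : X → ℝ) :
    ∫ ω, φ (ω i) ∂P = ∑ x, r x * φ x := by
  have h1 : ∫ ω, φ (ω i) ∂P = ∫ x, φ x ∂(P.map (fun ω : ℕ → X => ω i)) := by
    rw [integral_map (measurable_pi_apply i).aemeasurable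
      (Measurable.of_discrete (f := φ)).aestronglyMeasurable]
  rw [h1, hmap, integral_pmfMeasure r hr φ]

lemma prob_coord_mem (P : Measure (ℕ → X)) (r : X → ℝ) (i : ℕ)
    (hmap : P.map (fun ω : ℕ → X => ω i) = pmfMeasure r) (B : Set X) :
    P {ω | ω i ∈ B} = ∑ x, (if x ∈ B then ENNReal.ofReal (r x) else 0) := by
  have h1 : {ω : ℕ → X | ω i ∈ B} = (fun ω : ℕ → X => ω i) ⁻¹' B := rfl
  rw [h1, ← Measure.map_apply (measurable_pi_apply i) MeasurableSet.of_discrete, hmap,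
    pmfMeasure_apply]

end Infra


section LLR

variable [Fintype X] [Nonempty X] [MeasurableSpace X] [DiscreteMeasurableSpace X]
variable (p q : X → ℝ) (h : ℝ)

lemma llr_of_pos (hsupp : ∀ x, 0 < q x → 0 < p x) (x : X) (hx : 0 < q x) :
    llr p q x = (Real.log (q x / p x) : EReal) := by
  have hpx : 0 < p x := hsupp x hx
  rw [llr, ← ENNReal.ofReal_div_of_pos hpx, ENNReal.log_ofReal_of_pos (div_pos hx hpx)]

lemma llr_of_nonpos (x : X) (hx : q x ≤ 0) : llr p q x = ⊥ := by
  rw [llr, ENNReal.ofReal_eq_zero.2 hx, ENNReal.zero_div, ENNReal.log_zero]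

lemma sum_llr_bot (ω : ℕ → X) (s : Finset ℕ) (hq0 : ∀ x, 0 ≤ q x)
    (hbad : ∃ i ∈ s, ¬ 0 < q (ω i)) :
    ∑ i ∈ s, llr p q (ω i) = ⊥ := by
  induction s using Finset.induction with
  | empty => simp at hbad
  | @insert a t ha ih =>
    rw [Finset.sum_insert ha]
    obtain ⟨i, hi, hbadi⟩ := hbad
    rcases Finset.mem_insert.1 hi with rfl | hit
    · rw [llr_of_nonpos p q _ (le_antisymm (not_lt.1 hbadi) (hq0 _)).le, EReal.bot_add]
    · rw [ih ⟨i, hit, hbadi⟩, EReal.add_bot]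

lemma sum_llr_coe (ω : ℕ → X) (s : Finset ℕ) (hsupp : ∀ x, 0 < q x → 0 < p x)
    (hall : ∀ i ∈ s, 0 < q (ω i)) :
    ∑ i ∈ s, llr p q (ω i) = ((∑ i ∈ s, Real.log (q (ω i) / p (ω i)) : ℝ) : EReal) := by
  have h1 : ∑ i ∈ s, llr p q (ω i)
      = ∑ i ∈ s, ((Real.log (q (ω i) / p (ω i)) : ℝ) : EReal) :=
    Finset.sum_congr rfl fun i hi => llr_of_pos p q hsupp _ (hall i hi)
  rw [h1]
  have φhom : ℝ →+ EReal := ⟨⟨Real.toEReal, EReal.coe_zero⟩, EReal.coe_add⟩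
  exact (map_sum (⟨⟨Real.toEReal, EReal.coe_zero⟩, EReal.coe_add⟩ : ℝ →+ EReal)
    (fun i => Real.log (q (ω i) / p (ω i))) s).symm

def crossBy (n : ℕ) (ω : ℕ → X) : Prop :=
  ∃ j m : ℕ, j + 1 ≤ m ∧ m ≤ n ∧ (h : EReal) ≤ ∑ i ∈ Finset.Ico j m, llr p q (ω i)

lemma crossBy_mono {k n : ℕ} (hkn : k ≤ n) {ω : ℕ → X} (hc : crossBy p q h k ω) :
    crossBy p q h n ω := by
  obtain ⟨j, m, h1, h2, h3⟩ := hc; exact ⟨j, m, h1, h2.trans hkn, h3⟩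

lemma crossBy_coords (n : ℕ) : ∀ ω ω' : ℕ → X, (∀ i ∈ Finset.range n, ω i = ω' i) →
    (crossBy p q h n ω ↔ crossBy p q h n ω') := by
  have key : ∀ ω ω' : ℕ → X, (∀ i ∈ Finset.range n, ω i = ω' i) →
      crossBy p q h n ω → crossBy p q h n ω' := by
    rintro ω ω' hagree ⟨j, m, h1, h2, h3⟩
    refine ⟨j, m, h1, h2, ?_⟩
    rwa [show ∑ i ∈ Finset.Ico j m, llr p q (ω' i) = ∑ i ∈ Finset.Ico j m, llr p q (ω i) from
      Finset.sum_congr rfl fun i hi => by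
        rw [hagree i (Finset.mem_range.2 (lt_of_lt_of_le (Finset.mem_Ico.1 hi).2 h2))]]
  exact fun ω ω' hagree => ⟨key ω ω' hagree, key ω' ω fun i hi => (hagree i hi).symm⟩

lemma Tstar_le_iff (n : ℕ) (ω : ℕ → X) :
    Tstar p q h ω ≤ (n : ℕ∞) ↔ crossBy p q h n ω := by
  constructor
  · intro hle
    by_contra hc
    have hge : ((n + 1 : ℕ) : ℕ∞) ≤ Tstar p q h ω := by
      refine le_iInf fun j => le_sInf ?_
      rintro b ⟨m, ⟨hjm, hsum⟩, rfl⟩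
      have hmn : n + 1 ≤ m := by
        by_contra hmn
        exact hc ⟨j, m, hjm, by omega, hsum⟩
      exact_mod_cast hmn
    have h2 : ((n + 1 : ℕ) : ℕ∞) ≤ (n : ℕ∞) := hge.trans hle
    have h3 : n + 1 ≤ n := by exact_mod_cast h2
    omega
  · rintro ⟨j, m, hjm, hmn, hsum⟩
    have hmem : (m : ℕ∞) ∈ ((↑) '' {n : ℕ | j + 1 ≤ n ∧ (h : EReal) ≤ ∑ i ∈ Finset.Ico j n, llr p q (ω i)} : Set ℕ∞) :=
      Set.mem_image_of_mem _ (⟨hjm, hsum⟩ : m ∈ {n : ℕ | j + 1 ≤ n ∧ (h : EReal) ≤ ∑ i ∈ Finset.Ico j n, llr p q (ω i)})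
    refine (iInf_le _ j).trans ((sInf_le hmem).trans ?_)
    exact_mod_cast hmn

lemma lt_Tstar_iff (n : ℕ) (ω : ℕ → X) :
    (n : ℕ∞) < Tstar p q h ω ↔ ¬ crossBy p q h n ω := by
  rw [← Tstar_le_iff p q h n ω]; exact lt_iff_not_ge

lemma Tstar_eq_top_iff (ω : ℕ → X) :
    Tstar p q h ω = ⊤ ↔ ∀ n : ℕ, ¬ crossBy p q h n ω := by
  constructor
  · intro htop n
    rw [← Tstar_le_iff p q h n ω, htop]
    simp
  · intro hno
    by_contra hne
    obtain ⟨n, hn⟩ := WithTop.ne_top_iff_exists.1 hne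
    exact hno n ((Tstar_le_iff p q h n ω).1 hn.ge)

def Rn (n : ℕ) (ω : ℕ → X) : ℝ :=
  ∑ j ∈ Finset.range n, ∏ i ∈ Finset.Ico j n, (q (ω i) / p (ω i))

lemma Rn_succ (n : ℕ) (ω : ℕ → X) :
    Rn p q (n + 1) ω = (Rn p q n ω + 1) * (q (ω n) / p (ω n)) := by
  unfold Rn
  rw [Finset.sum_range_succ]
  rw [Finset.sum_congr rfl (fun j hj => Finset.prod_Ico_succ_top
    (le_of_lt (Finset.mem_range.1 hj)) (fun i => q (ω i) / p (ω i)))]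
  rw [Finset.prod_Ico_succ_top (le_refl n), Finset.Ico_self, Finset.prod_empty, one_mul,
    ← Finset.sum_mul]
  ring

lemma Rn_nonneg (hp0 : ∀ x, 0 ≤ p x) (hq0 : ∀ x, 0 ≤ q x) (n : ℕ) (ω : ℕ → X) :
    0 ≤ Rn p q n ω :=
  Finset.sum_nonneg fun _ _ => Finset.prod_nonneg fun _ _ => div_nonneg (hq0 _) (hp0 _)

lemma Rn_coords (n : ℕ) : ∀ ω ω' : ℕ → X, (∀ i ∈ Finset.range n, ω i = ω' i) →
    Rn p q n ω = Rn p q n ω' := by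
  intro ω ω' hagree
  unfold Rn
  refine Finset.sum_congr rfl fun j _ => Finset.prod_congr rfl fun i hi => ?_
  rw [hagree i (Finset.mem_range.2 (Finset.mem_Ico.1 hi).2)]

def snn (n : ℕ) (ω : ℕ → X) : ℕ :=
  ∑ k ∈ Finset.range n, if crossBy p q h k ω then 0 else 1

lemma snn_succ (n : ℕ) (ω : ℕ → X) :
    snn p q h (n + 1) ω = snn p q h n ω + if crossBy p q h n ω then 0 else 1 :=
  Finset.sum_range_succ _ _

lemma snn_le (n : ℕ) (ω : ℕ → X) : snn p q h n ω ≤ n := by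
  unfold snn
  calc ∑ k ∈ Finset.range n, (if crossBy p q h k ω then 0 else 1)
      ≤ ∑ _k ∈ Finset.range n, 1 := Finset.sum_le_sum (fun k _ => by split <;> omega)
    _ = n := by simp

lemma snn_of_not {n : ℕ} {ω : ℕ → X} (hc : ¬ crossBy p q h n ω) : snn p q h n ω = n := by
  induction n with
  | zero => simp [snn]
  | succ n ih =>
    have hcn : ¬ crossBy p q h n ω := fun hcc => hc (crossBy_mono p q h (Nat.le_succ n) hcc)
    rw [snn_succ, ih hcn, if_neg hcn]

lemma snn_find {n : ℕ} {ω : ℕ → X} (hc : crossBy p q h n ω) :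
    snn p q h n ω = Nat.find (⟨n, hc⟩ : ∃ k, crossBy p q h k ω) := by
  set k0 := Nat.find (⟨n, hc⟩ : ∃ k, crossBy p q h k ω) with hk0
  have hk0n : k0 ≤ n := Nat.find_min' _ hc
  have hspec : crossBy p q h k0 ω := Nat.find_spec (⟨n, hc⟩ : ∃ k, crossBy p q h k ω)
  have hstep : ∀ k ∈ Finset.range n,
      (if crossBy p q h k ω then 0 else 1) = if k < k0 then 1 else 0 := by
    intro k _
    by_cases hk : crossBy p q h k ω
    · rw [if_pos hk, if_neg (not_lt.2 (Nat.find_min' _ hk))]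
    · rw [if_neg hk, if_pos (by by_contra hkk; exact hk (crossBy_mono p q h (not_lt.1 hkk) hspec))]
  unfold snn
  rw [Finset.sum_congr rfl hstep,
    ← Finset.sum_subset (Finset.range_subset_range.2 hk0n)
      (fun x _ hx => if_neg (by simpa using hx)),
    Finset.sum_congr rfl (fun k hk => if_pos (Finset.mem_range.1 hk))]
  simp

lemma snn_coords (n : ℕ) : ∀ ω ω' : ℕ → X, (∀ i ∈ Finset.range n, ω i = ω' i) →
    snn p q h n ω = snn p q h n ω' := by
  intro ω ω' hagree
  unfold snn
  refine Finset.sum_congr rfl fun k hk => ?_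
  have : crossBy p q h k ω ↔ crossBy p q h k ω' :=
    crossBy_coords p q h k ω ω' fun i hi => hagree i
      (Finset.mem_range.2 (lt_of_lt_of_le (Finset.mem_range.1 hi) (le_of_lt (Finset.mem_range.1 hk))))
  simp only [this]

lemma Rst_coords (n : ℕ) : ∀ ω ω' : ℕ → X, (∀ i ∈ Finset.range n, ω i = ω' i) →
    Rn p q (snn p q h n ω) ω = Rn p q (snn p q h n ω') ω' := by
  intro ω ω' hagree
  rw [← snn_coords p q h n ω ω' hagree]
  exact Rn_coords p q _ ω ω' fun i hi => hagree i
    (Finset.mem_range.2 (lt_of_lt_of_le (Finset.mem_range.1 hi) (snn_le p q h n ω)))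

lemma exp_le_Rst (hsupp : ∀ x, 0 < q x → 0 < p x) (hp0 : ∀ x, 0 ≤ p x) (hq0 : ∀ x, 0 ≤ q x)
    {n : ℕ} {ω : ℕ → X} (hc : crossBy p q h n ω) :
    Real.exp h ≤ Rn p q (snn p q h n ω) ω := by
  rw [snn_find p q h hc]
  set k0 := Nat.find (⟨n, hc⟩ : ∃ k, crossBy p q h k ω) with hk0
  obtain ⟨j, m, hjm, hmk0, hsum⟩ := Nat.find_spec (⟨n, hc⟩ : ∃ k, crossBy p q h k ω)
  have hmeq : m = k0 := le_antisymm hmk0 (Nat.find_min' _ ⟨j, m, hjm, le_refl m, hsum⟩)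
  rw [hmeq] at hsum hjm
  have hall : ∀ i ∈ Finset.Ico j k0, 0 < q (ω i) := by
    by_contra hbad
    push_neg at hbad
    obtain ⟨i, hi, hbadi⟩ := hbad
    rw [sum_llr_bot p q ω _ hq0 ⟨i, hi, fun hcon => absurd hcon (by exact_mod_cast hbadi.not_gt)⟩] at hsum
    exact absurd hsum (by simp)
  rw [sum_llr_coe p q ω _ hsupp hall] at hsum
  have hsum' : h ≤ ∑ i ∈ Finset.Ico j k0, Real.log (q (ω i) / p (ω i)) := by exact_mod_cast hsum
  have hexp : Real.exp h ≤ ∏ i ∈ Finset.Ico j k0, (q (ω i) / p (ω i)) := by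
    calc Real.exp h ≤ Real.exp (∑ i ∈ Finset.Ico j k0, Real.log (q (ω i) / p (ω i))) :=
          Real.exp_le_exp.2 hsum'
      _ = ∏ i ∈ Finset.Ico j k0, Real.exp (Real.log (q (ω i) / p (ω i))) := Real.exp_sum _ _
      _ = ∏ i ∈ Finset.Ico j k0, (q (ω i) / p (ω i)) :=
          Finset.prod_congr rfl fun i hi =>
            Real.exp_log (div_pos (hall i hi) (hsupp _ (hall i hi)))
  refine hexp.trans ?_
  unfold Rn
  exact Finset.single_le_sum (f := fun j' => ∏ i ∈ Finset.Ico j' k0, (q (ω i) / p (ω i)))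
    (fun j' _ => Finset.prod_nonneg fun i _ => div_nonneg (hq0 _) (hp0 _))
    (Finset.mem_range.2 (Nat.lt_of_succ_le hjm))

lemma snn_le_Tstar (n : ℕ) (ω : ℕ → X) :
    ((snn p q h n ω : ℕ) : ℕ∞) ≤ Tstar p q h ω := by
  by_cases hc : crossBy p q h n ω
  · rw [snn_find p q h hc]
    have hex : ∃ k, crossBy p q h k ω := ⟨n, hc⟩
    have hfind : Nat.find (⟨n, hc⟩ : ∃ k, crossBy p q h k ω) = Nat.find hex := rfl
    rw [hfind]
    set k0 := Nat.find hex with hk0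
    rcases Nat.eq_zero_or_pos k0 with h0 | h0
    · simp [h0]
    · have hnot : ¬ crossBy p q h (k0 - 1) ω := Nat.find_min hex (by omega)
      have hlt : ((k0 - 1 : ℕ) : ℕ∞) < Tstar p q h ω := (lt_Tstar_iff p q h _ ω).2 hnot
      have hk1 : k0 = (k0 - 1) + 1 := by omega
      have hcast : ((k0 : ℕ) : ℕ∞) = ((k0 - 1 : ℕ) : ℕ∞) + 1 := by
        calc ((k0 : ℕ) : ℕ∞) = (((k0 - 1) + 1 : ℕ) : ℕ∞) := by rw [← hk1]
          _ = ((k0 - 1 : ℕ) : ℕ∞) + 1 := by push_cast; rfl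
      rw [hcast]
      exact (ENat.add_one_le_iff (by simp)).2 hlt
  · rw [snn_of_not p q h hc]
    exact le_of_lt ((lt_Tstar_iff p q h n ω).2 hc)

end LLR


section Part1

variable [Fintype X] [Nonempty X] [MeasurableSpace X] [DiscreteMeasurableSpace X]
variable (p q : X → ℝ) (h : ℝ)

lemma sum_p_lr (hp : IsPMF p) (hq : IsPMF q) (hsupp : ∀ x, 0 < q x → 0 < p x) :
    ∑ x, p x * (q x / p x) = 1 := by
  have hpt : ∀ x, p x * (q x / p x) = q x := by
    intro x
    by_cases hpx : p x = 0
    · have hqx : q x = 0 := by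
        by_contra hqq
        have := hsupp x (lt_of_le_of_ne (hq.1 x) (Ne.symm hqq))
        rw [hpx] at this
        exact lt_irrefl 0 this
      rw [hpx, hqx]; simp
    · rw [mul_comm, div_mul_cancel₀ _ hpx]
  rw [Finset.sum_congr rfl fun x _ => hpt x]
  exact hq.2

lemma martingale_identity (Pinf : Measure (ℕ → X)) [IsProbabilityMeasure Pinf]
    (hPinf : HasLaw Pinf (fun _ => p)) (hp : IsPMF p) (hq : IsPMF q)
    (hsupp : ∀ x, 0 < q x → 0 < p x) (n : ℕ) :
    ∫ ω, Rn p q (snn p q h n ω) ω ∂Pinf = ∫ ω, (snn p q h n ω : ℝ) ∂Pinf := by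
  induction n with
  | zero => simp [snn, Rn]
  | succ n ih =>
    set f : (ℕ → X) → ℝ := fun ω => if crossBy p q h n ω then 0 else Rn p q n ω + 1 with hf
    set g : (ℕ → X) → ℝ := fun ω => q (ω n) / p (ω n) - 1 with hg
    have hfc : ∀ ω ω', (∀ i ∈ Finset.range n, ω i = ω' i) → f ω = f ω' := by
      intro ω ω' ha
      simp only [hf]
      rw [Rn_coords p q n ω ω' ha]
      simp only [crossBy_coords p q h n ω ω' ha]
    have hgc : ∀ ω ω', (∀ i ∈ ({n} : Finset ℕ), ω i = ω' i) → g ω = g ω' := by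
      intro ω ω' ha
      simp only [hg]
      rw [ha n (Finset.mem_singleton_self n)]
    have hpt : ∀ ω, Rn p q (snn p q h (n+1) ω) ω
        = Rn p q (snn p q h n ω) ω + (f ω * g ω + (if crossBy p q h n ω then (0:ℝ) else 1)) := by
      intro ω
      by_cases hc : crossBy p q h n ω
      · rw [snn_succ]
        simp [hf, hg, hc]
      · have h1 : snn p q h n ω = n := snn_of_not p q h hc
        rw [snn_succ, h1, if_neg hc, Rn_succ]
        simp only [hf, hg, if_neg hc]
        ring
    have hRstint : Integrable (fun ω => Rn p q (snn p q h n ω) ω) Pinf :=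
      integrable_of_coords (Finset.range n) _ (Rst_coords p q h n) Pinf
    have hsnnint : Integrable (fun ω => (snn p q h n ω : ℝ)) Pinf :=
      integrable_of_coords (Finset.range n) _
        (fun ω ω' ha => by rw [snn_coords p q h n ω ω' ha]) Pinf
    have hindc : ∀ ω ω', (∀ i ∈ Finset.range n, ω i = ω' i) →
        (if crossBy p q h n ω then (0:ℝ) else 1) = (if crossBy p q h n ω' then (0:ℝ) else 1) := by
      intro ω ω' ha
      simp only [crossBy_coords p q h n ω ω' ha]
    have hindint : Integrable (fun ω => if crossBy p q h n ω then (0:ℝ) else 1) Pinf :=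
      integrable_of_coords (Finset.range n) _ hindc Pinf
    have hfgc : ∀ ω ω', (∀ i ∈ Finset.range (n+1), ω i = ω' i) → f ω * g ω = f ω' * g ω' := by
      intro ω ω' ha
      rw [hfc ω ω' (fun i hi => ha i (Finset.mem_range.2
          (lt_trans (Finset.mem_range.1 hi) (Nat.lt_succ_self n)))),
        hgc ω ω' (fun i hi => ha i (by
          rw [Finset.mem_singleton.1 hi]
          exact Finset.self_mem_range_succ n))]
    have hfgint : Integrable (fun ω => f ω * g ω) Pinf :=
      integrable_of_coords (Finset.range (n+1)) _ hfgc Pinf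
    have hfg : ∫ ω, f ω * g ω ∂Pinf = (∫ ω, f ω ∂Pinf) * ∫ ω, g ω ∂Pinf :=
      integral_mul_of_coords Pinf hPinf.1 (Finset.range n) {n}
        (by simp) f g hfc hgc
    have hEg : ∫ ω, g ω ∂Pinf = 0 := by
      have hg1c : ∀ ω ω' : ℕ → X, (∀ i ∈ ({n} : Finset ℕ), ω i = ω' i) →
          q (ω n) / p (ω n) = q (ω' n) / p (ω' n) := by
        intro ω ω' ha
        rw [ha n (Finset.mem_singleton_self n)]
      have h1 : ∫ ω, (q (ω n) / p (ω n)) ∂Pinf = 1 := by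
        rw [integral_coord Pinf p hp.1 n (hPinf.2 n) (fun x => q x / p x)]
        exact sum_p_lr p q hp hq hsupp
      simp only [hg]
      rw [integral_sub (integrable_of_coords {n} _ hg1c Pinf) (integrable_const 1), h1,
        integral_const]
      simp
    have hsum2 : Integrable (fun ω => f ω * g ω
        + (if crossBy p q h n ω then (0:ℝ) else 1)) Pinf := hfgint.add hindint
    calc ∫ ω, Rn p q (snn p q h (n+1) ω) ω ∂Pinf
        = ∫ ω, (Rn p q (snn p q h n ω) ω
            + (f ω * g ω + (if crossBy p q h n ω then (0:ℝ) else 1))) ∂Pinf :=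
          integral_congr_ae (Filter.Eventually.of_forall fun ω => hpt ω)
      _ = ∫ ω, Rn p q (snn p q h n ω) ω ∂Pinf
          + (∫ ω, (f ω * g ω) ∂Pinf + ∫ ω, (if crossBy p q h n ω then (0:ℝ) else 1) ∂Pinf) := by
          rw [integral_add hRstint hsum2, integral_add hfgint hindint]
      _ = ∫ ω, (snn p q h n ω : ℝ) ∂Pinf
          + (0 + ∫ ω, (if crossBy p q h n ω then (0:ℝ) else 1) ∂Pinf) := by
          rw [ih, hfg, hEg, mul_zero]
      _ = ∫ ω, ((snn p q h n ω : ℝ) + (if crossBy p q h n ω then (0:ℝ) else 1)) ∂Pinf := by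
          rw [zero_add, ← integral_add hsnnint hindint]
      _ = ∫ ω, (snn p q h (n+1) ω : ℝ) ∂Pinf := by
          refine integral_congr_ae (Filter.Eventually.of_forall fun ω => ?_)
          show (snn p q h n ω : ℝ) + (if crossBy p q h n ω then (0:ℝ) else 1)
            = (snn p q h (n+1) ω : ℝ)
          rw [snn_succ]
          by_cases hc : crossBy p q h n ω <;> simp [hc]

lemma part1_bound (Pinf : Measure (ℕ → X)) [IsProbabilityMeasure Pinf]
    (hPinf : HasLaw Pinf (fun _ => p)) (hp : IsPMF p) (hq : IsPMF q)
    (hsupp : ∀ x, 0 < q x → 0 < p x) :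
    ENNReal.ofReal (Real.exp h) ≤ ∫⁻ ω, (Tstar p q h ω : ℝ≥0∞) ∂Pinf := by
  have hmeasC : ∀ n, MeasurableSet {ω : ℕ → X | crossBy p q h n ω} := fun n =>
    measurableSet_of_coords (Finset.range n) _ (crossBy_coords p q h n)
  have hmeasT : MeasurableSet {ω : ℕ → X | Tstar p q h ω = ⊤} := by
    have hset : {ω : ℕ → X | Tstar p q h ω = ⊤} = ⋂ n : ℕ, {ω | crossBy p q h n ω}ᶜ := by
      ext ω
      simp only [Set.mem_setOf_eq, Set.mem_iInter, Set.mem_compl_iff,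
        Tstar_eq_top_iff p q h ω]
    rw [hset]
    exact MeasurableSet.iInter fun n => (hmeasC n).compl
  by_cases htop : Pinf {ω | Tstar p q h ω = ⊤} = 0
  case neg =>
    have h1 : ∫⁻ ω in {ω | Tstar p q h ω = ⊤}, (Tstar p q h ω : ℝ≥0∞) ∂Pinf = ⊤ := by
      rw [setLIntegral_congr_fun (g := fun _ => (⊤ : ℝ≥0∞)) hmeasT (
        (fun ω (hω : Tstar p q h ω = ⊤) => by rw [hω]; exact ENat.toENNReal_top))]
      rw [setLIntegral_const, ENNReal.top_mul htop]
    calc ENNReal.ofReal (Real.exp h) ≤ ⊤ := le_top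
      _ = ∫⁻ ω in {ω | Tstar p q h ω = ⊤}, (Tstar p q h ω : ℝ≥0∞) ∂Pinf := h1.symm
      _ ≤ ∫⁻ ω, (Tstar p q h ω : ℝ≥0∞) ∂Pinf := setLIntegral_le_lintegral _ _
  case pos =>
    have hkey : ∀ n : ℕ, ENNReal.ofReal (Real.exp h) * Pinf {ω | crossBy p q h n ω}
        ≤ ∫⁻ ω, (Tstar p q h ω : ℝ≥0∞) ∂Pinf := by
      intro n
      have hRge0 : 0 ≤ᵐ[Pinf] fun ω => Rn p q (snn p q h n ω) ω :=
        Filter.Eventually.of_forall fun ω => Rn_nonneg p q hp.1 hq.1 _ ω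
      have hRint : Integrable (fun ω => Rn p q (snn p q h n ω) ω) Pinf :=
        integrable_of_coords (Finset.range n) _ (Rst_coords p q h n) Pinf
      have hsint : Integrable (fun ω => (snn p q h n ω : ℝ)) Pinf :=
        integrable_of_coords (Finset.range n) _
          (fun ω ω' ha => by rw [snn_coords p q h n ω ω' ha]) Pinf
      have hRmeas : Measurable (fun ω => Rn p q (snn p q h n ω) ω) :=
        measurable_of_coords (Finset.range n) _ (Rst_coords p q h n)
      calc ENNReal.ofReal (Real.exp h) * Pinf {ω | crossBy p q h n ω}
          = ∫⁻ _ω in {ω | crossBy p q h n ω}, ENNReal.ofReal (Real.exp h) ∂Pinf :=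
            (setLIntegral_const _ _).symm
        _ ≤ ∫⁻ ω in {ω | crossBy p q h n ω},
              ENNReal.ofReal (Rn p q (snn p q h n ω) ω) ∂Pinf :=
            setLIntegral_mono hRmeas.ennreal_ofReal fun ω hω =>
              ENNReal.ofReal_le_ofReal (exp_le_Rst p q h hsupp hp.1 hq.1 hω)
        _ ≤ ∫⁻ ω, ENNReal.ofReal (Rn p q (snn p q h n ω) ω) ∂Pinf :=
            setLIntegral_le_lintegral _ _
        _ = ENNReal.ofReal (∫ ω, Rn p q (snn p q h n ω) ω ∂Pinf) :=
            (ofReal_integral_eq_lintegral_ofReal hRint hRge0).symm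
        _ = ENNReal.ofReal (∫ ω, (snn p q h n ω : ℝ) ∂Pinf) := by
            rw [martingale_identity p q h Pinf hPinf hp hq hsupp n]
        _ = ∫⁻ ω, ENNReal.ofReal ((snn p q h n ω : ℝ)) ∂Pinf :=
            ofReal_integral_eq_lintegral_ofReal hsint
              (Filter.Eventually.of_forall fun ω => Nat.cast_nonneg _)
        _ = ∫⁻ ω, ((snn p q h n ω : ℕ) : ℝ≥0∞) ∂Pinf := by
            refine lintegral_congr fun ω => ?_
            rw [ENNReal.ofReal_natCast]
        _ ≤ ∫⁻ ω, (Tstar p q h ω : ℝ≥0∞) ∂Pinf := by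
            refine lintegral_mono fun ω => ?_
            calc ((snn p q h n ω : ℕ) : ℝ≥0∞)
                = (((snn p q h n ω : ℕ) : ℕ∞) : ℝ≥0∞) := by rw [ENat.toENNReal_coe]
              _ ≤ ((Tstar p q h ω : ℕ∞) : ℝ≥0∞) := ENat.toENNReal_le.2 (snn_le_Tstar p q h n ω)
    have hmono : Monotone (fun n => {ω : ℕ → X | crossBy p q h n ω}) :=
      fun a b hab ω hω => crossBy_mono p q h hab hω
    have hunion : ⋃ n, {ω : ℕ → X | crossBy p q h n ω} = {ω | Tstar p q h ω = ⊤}ᶜ := by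
      ext ω
      simp only [Set.mem_iUnion, Set.mem_setOf_eq, Set.mem_compl_iff,
        Tstar_eq_top_iff p q h ω]
      push_neg
      rfl
    have hsup : (⨆ n, Pinf {ω : ℕ → X | crossBy p q h n ω}) = 1 := by
      rw [← Directed.measure_iUnion (hmono.directed_le), hunion,
        measure_compl hmeasT (measure_ne_top _ _), htop, measure_univ, tsub_zero]
    calc ENNReal.ofReal (Real.exp h)
        = ENNReal.ofReal (Real.exp h) * ⨆ n, Pinf {ω : ℕ → X | crossBy p q h n ω} := by
          rw [hsup, mul_one]
      _ = ⨆ n, ENNReal.ofReal (Real.exp h) * Pinf {ω : ℕ → X | crossBy p q h n ω} := by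
          rw [ENNReal.mul_iSup]
      _ ≤ ∫⁻ ω, (Tstar p q h ω : ℝ≥0∞) ∂Pinf := iSup_le hkey

end Part1


section Part2

variable [Fintype X] [Nonempty X] [MeasurableSpace X] [DiscreteMeasurableSpace X]
variable (p q : X → ℝ) (h : ℝ)

def wcross (ν k : ℕ) (ω : ℕ → X) : Prop :=
  ∃ m : ℕ, 1 ≤ m ∧ m ≤ k ∧ (h : EReal) ≤ ∑ i ∈ Finset.Ico ν (ν + m), llr p q (ω i)

def wnn (ν n : ℕ) (ω : ℕ → X) : ℕ :=
  ∑ k ∈ Finset.range n, if wcross p q h ν k ω then 0 else 1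

def Sq (ν m : ℕ) (ω : ℕ → X) : ℝ :=
  ∑ k ∈ Finset.range m, Real.log (q (ω (ν + k)) / p (ω (ν + k)))

lemma wcross_mono {ν k n : ℕ} (hkn : k ≤ n) {ω : ℕ → X} (hc : wcross p q h ν k ω) :
    wcross p q h ν n ω := by
  obtain ⟨m, h1, h2, h3⟩ := hc; exact ⟨m, h1, h2.trans hkn, h3⟩

lemma wcross_coords (ν k : ℕ) : ∀ ω ω' : ℕ → X,
    (∀ i ∈ Finset.Ico ν (ν + k), ω i = ω' i) →
    (wcross p q h ν k ω ↔ wcross p q h ν k ω') := by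
  have key : ∀ ω ω' : ℕ → X, (∀ i ∈ Finset.Ico ν (ν + k), ω i = ω' i) →
      wcross p q h ν k ω → wcross p q h ν k ω' := by
    rintro ω ω' hagree ⟨m, h1, h2, h3⟩
    refine ⟨m, h1, h2, ?_⟩
    rwa [show ∑ i ∈ Finset.Ico ν (ν + m), llr p q (ω' i)
        = ∑ i ∈ Finset.Ico ν (ν + m), llr p q (ω i) from
      Finset.sum_congr rfl fun i hi => by
        rw [hagree i (Finset.mem_Ico.2 ⟨(Finset.mem_Ico.1 hi).1,
          lt_of_lt_of_le (Finset.mem_Ico.1 hi).2 (by omega)⟩)]]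
  exact fun ω ω' hagree => ⟨key ω ω' hagree, key ω' ω fun i hi => (hagree i hi).symm⟩

lemma wnn_succ (ν n : ℕ) (ω : ℕ → X) :
    wnn p q h ν (n + 1) ω = wnn p q h ν n ω + if wcross p q h ν n ω then 0 else 1 :=
  Finset.sum_range_succ _ _

lemma wnn_le (ν n : ℕ) (ω : ℕ → X) : wnn p q h ν n ω ≤ n := by
  unfold wnn
  calc ∑ k ∈ Finset.range n, (if wcross p q h ν k ω then 0 else 1)
      ≤ ∑ _k ∈ Finset.range n, 1 := Finset.sum_le_sum (fun k _ => by split <;> omega)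
    _ = n := by simp

lemma wnn_mono (ν : ℕ) (ω : ℕ → X) {n n' : ℕ} (hnn : n ≤ n') :
    wnn p q h ν n ω ≤ wnn p q h ν n' ω := by
  unfold wnn
  exact Finset.sum_le_sum_of_subset (Finset.range_subset_range.2 hnn)

lemma wnn_of_not {ν n : ℕ} {ω : ℕ → X} (hc : ¬ wcross p q h ν n ω) : wnn p q h ν n ω = n := by
  induction n with
  | zero => simp [wnn]
  | succ n ih =>
    have hcn : ¬ wcross p q h ν n ω := fun hcc => hc (wcross_mono p q h (Nat.le_succ n) hcc)
    rw [wnn_succ, ih hcn, if_neg hcn]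

lemma wnn_find {ν n : ℕ} {ω : ℕ → X} (hc : wcross p q h ν n ω) :
    wnn p q h ν n ω = Nat.find (⟨n, hc⟩ : ∃ k, wcross p q h ν k ω) := by
  set k0 := Nat.find (⟨n, hc⟩ : ∃ k, wcross p q h ν k ω) with hk0
  have hk0n : k0 ≤ n := Nat.find_min' _ hc
  have hspec : wcross p q h ν k0 ω := Nat.find_spec (⟨n, hc⟩ : ∃ k, wcross p q h ν k ω)
  have hstep : ∀ k ∈ Finset.range n,
      (if wcross p q h ν k ω then 0 else 1) = if k < k0 then 1 else 0 := by
    intro k _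
    by_cases hk : wcross p q h ν k ω
    · rw [if_pos hk, if_neg (not_lt.2 (Nat.find_min' _ hk))]
    · rw [if_neg hk, if_pos (by
        by_contra hkk
        exact hk (wcross_mono p q h (not_lt.1 hkk) hspec))]
  unfold wnn
  rw [Finset.sum_congr rfl hstep,
    ← Finset.sum_subset (Finset.range_subset_range.2 hk0n)
      (fun x _ hx => if_neg (by simpa using hx)),
    Finset.sum_congr rfl (fun k hk => if_pos (Finset.mem_range.1 hk))]
  simp

lemma wnn_coords (ν n : ℕ) : ∀ ω ω' : ℕ → X,
    (∀ i ∈ Finset.Ico ν (ν + n), ω i = ω' i) → wnn p q h ν n ω = wnn p q h ν n ω' := by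
  intro ω ω' hagree
  unfold wnn
  refine Finset.sum_congr rfl fun k hk => ?_
  have hiff : wcross p q h ν k ω ↔ wcross p q h ν k ω' :=
    wcross_coords p q h ν k ω ω' fun i hi => hagree i (Finset.mem_Ico.2
      ⟨(Finset.mem_Ico.1 hi).1, lt_of_lt_of_le (Finset.mem_Ico.1 hi).2
        (by have := Finset.mem_range.1 hk; omega)⟩)
  simp only [hiff]

lemma Sq_eq (ν m : ℕ) (ω : ℕ → X) :
    Sq p q ν m ω = ∑ i ∈ Finset.Ico ν (ν + m), Real.log (q (ω i) / p (ω i)) := by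
  rw [Finset.sum_Ico_eq_sum_range]
  simp [Sq]

lemma Sq_coords (ν m : ℕ) : ∀ ω ω' : ℕ → X,
    (∀ i ∈ Finset.Ico ν (ν + m), ω i = ω' i) → Sq p q ν m ω = Sq p q ν m ω' := by
  intro ω ω' hagree
  unfold Sq
  refine Finset.sum_congr rfl fun k hk => ?_
  rw [hagree (ν + k) (Finset.mem_Ico.2 ⟨by omega, by have := Finset.mem_range.1 hk; omega⟩)]

lemma Sst_coords (ν n : ℕ) : ∀ ω ω' : ℕ → X,
    (∀ i ∈ Finset.Ico ν (ν + n), ω i = ω' i) →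
    Sq p q ν (wnn p q h ν n ω) ω = Sq p q ν (wnn p q h ν n ω') ω' := by
  intro ω ω' hagree
  rw [← wnn_coords p q h ν n ω ω' hagree]
  exact Sq_coords p q ν _ ω ω' fun i hi => hagree i (Finset.mem_Ico.2
    ⟨(Finset.mem_Ico.1 hi).1, lt_of_lt_of_le (Finset.mem_Ico.1 hi).2
      (by have := wnn_le p q h ν n ω; omega)⟩)

lemma wcross_iff_real (hsupp : ∀ x, 0 < q x → 0 < p x) (ν k : ℕ) (ω : ℕ → X)
    (hω : ∀ j : ℕ, 0 < q (ω (ν + j))) :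
    wcross p q h ν k ω ↔ ∃ m : ℕ, 1 ≤ m ∧ m ≤ k ∧ h ≤ Sq p q ν m ω := by
  have hconv : ∀ m : ℕ, (∑ i ∈ Finset.Ico ν (ν + m), llr p q (ω i))
      = ((Sq p q ν m ω : ℝ) : EReal) := by
    intro m
    have hall : ∀ i ∈ Finset.Ico ν (ν + m), 0 < q (ω i) := by
      intro i hi
      have h1 := (Finset.mem_Ico.1 hi).1
      have h2 : i = ν + (i - ν) := by omega
      rw [h2]
      exact hω (i - ν)
    rw [sum_llr_coe p q ω _ hsupp hall, ← Sq_eq]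
  constructor
  · rintro ⟨m, h1, h2, h3⟩
    rw [hconv m] at h3
    exact ⟨m, h1, h2, by exact_mod_cast h3⟩
  · rintro ⟨m, h1, h2, h3⟩
    exact ⟨m, h1, h2, by rw [hconv m]; exact_mod_cast h3⟩

lemma sum_q_log (hq : IsPMF q) : ∑ x, q x * Real.log (q x / p x) = KL q p := by
  rw [KL]
  refine (Finset.sum_subset (Finset.filter_subset _ _) ?_).symm
  intro x _ hx
  simp only [Finset.mem_filter, Finset.mem_univ, true_and] at hx
  rw [le_antisymm (not_lt.1 hx) (hq.1 x), zero_mul]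

lemma wald_identity (ν : ℕ) (P : Measure (ℕ → X)) [IsProbabilityMeasure P]
    (hP : HasLaw P (fun i => if i < ν then p else q)) (hq : IsPMF q) (n : ℕ) :
    ∫ ω, Sq p q ν (wnn p q h ν n ω) ω ∂P
      = KL q p * ∫ ω, (wnn p q h ν n ω : ℝ) ∂P := by
  induction n with
  | zero => simp [wnn, Sq]
  | succ n ih =>
    set f : (ℕ → X) → ℝ := fun ω => if wcross p q h ν n ω then 0 else 1 with hf
    set g : (ℕ → X) → ℝ := fun ω => Real.log (q (ω (ν + n)) / p (ω (ν + n))) with hg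
    have hfc : ∀ ω ω' : ℕ → X, (∀ i ∈ Finset.Ico ν (ν + n), ω i = ω' i) → f ω = f ω' := by
      intro ω ω' ha
      simp only [hf]
      simp only [wcross_coords p q h ν n ω ω' ha]
    have hgc : ∀ ω ω' : ℕ → X, (∀ i ∈ ({ν + n} : Finset ℕ), ω i = ω' i) → g ω = g ω' := by
      intro ω ω' ha
      simp only [hg]
      rw [ha (ν + n) (Finset.mem_singleton_self _)]
    have hpt : ∀ ω, Sq p q ν (wnn p q h ν (n+1) ω) ω
        = Sq p q ν (wnn p q h ν n ω) ω + f ω * g ω := by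
      intro ω
      by_cases hc : wcross p q h ν n ω
      · rw [wnn_succ]
        simp [hf, hc]
      · have h1 : wnn p q h ν n ω = n := wnn_of_not p q h hc
        rw [wnn_succ, h1, if_neg hc]
        unfold Sq
        rw [Finset.sum_range_succ]
        simp only [hf, hg, if_neg hc]
        ring
    have hSstint : Integrable (fun ω => Sq p q ν (wnn p q h ν n ω) ω) P :=
      integrable_of_coords (Finset.Ico ν (ν + n)) _ (Sst_coords p q h ν n) P
    have hwint : Integrable (fun ω => (wnn p q h ν n ω : ℝ)) P :=
      integrable_of_coords (Finset.Ico ν (ν + n)) _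
        (fun ω ω' ha => by rw [wnn_coords p q h ν n ω ω' ha]) P
    have hfint : Integrable f P := integrable_of_coords (Finset.Ico ν (ν + n)) f hfc P
    have hfgc : ∀ ω ω' : ℕ → X, (∀ i ∈ Finset.Ico ν (ν + (n+1)), ω i = ω' i) →
        f ω * g ω = f ω' * g ω' := by
      intro ω ω' ha
      rw [hfc ω ω' (fun i hi => ha i (Finset.mem_Ico.2 ⟨(Finset.mem_Ico.1 hi).1,
          lt_of_lt_of_le (Finset.mem_Ico.1 hi).2 (by omega)⟩)),
        hgc ω ω' (fun i hi => ha i (by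
          rw [Finset.mem_singleton.1 hi]
          exact Finset.mem_Ico.2 ⟨by omega, by omega⟩))]
    have hfgint : Integrable (fun ω => f ω * g ω) P :=
      integrable_of_coords (Finset.Ico ν (ν + (n+1))) _ hfgc P
    have hfg : ∫ ω, f ω * g ω ∂P = (∫ ω, f ω ∂P) * ∫ ω, g ω ∂P :=
      integral_mul_of_coords P hP.1 (Finset.Ico ν (ν + n)) {ν + n}
        (by
          rw [Finset.disjoint_singleton_right]
          intro hmem
          have := Finset.mem_Ico.1 hmem
          omega) f g hfc hgc
    have hEg : ∫ ω, g ω ∂P = KL q p := by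
      have hmap : P.map (fun ω : ℕ → X => ω (ν + n)) = pmfMeasure q := by
        have h2 := hP.2 (ν + n)
        have h3 : (if ν + n < ν then p else q) = q := if_neg (by omega)
        simp only [] at h2
        rwa [h3] at h2
      simp only [hg]
      rw [integral_coord P q hq.1 (ν + n) hmap (fun x => Real.log (q x / p x))]
      exact sum_q_log p q hq
    calc ∫ ω, Sq p q ν (wnn p q h ν (n+1) ω) ω ∂P
        = ∫ ω, (Sq p q ν (wnn p q h ν n ω) ω + f ω * g ω) ∂P :=
          integral_congr_ae (Filter.Eventually.of_forall fun ω => hpt ω)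
      _ = ∫ ω, Sq p q ν (wnn p q h ν n ω) ω ∂P + ∫ ω, (f ω * g ω) ∂P :=
          integral_add hSstint hfgint
      _ = KL q p * ∫ ω, (wnn p q h ν n ω : ℝ) ∂P + (∫ ω, f ω ∂P) * KL q p := by
          rw [ih, hfg, hEg]
      _ = KL q p * (∫ ω, (wnn p q h ν n ω : ℝ) ∂P + ∫ ω, f ω ∂P) := by ring
      _ = KL q p * ∫ ω, ((wnn p q h ν n ω : ℝ) + f ω) ∂P := by
          rw [integral_add hwint hfint]
      _ = KL q p * ∫ ω, (wnn p q h ν (n+1) ω : ℝ) ∂P := by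
          congr 1
          refine integral_congr_ae (Filter.Eventually.of_forall fun ω => ?_)
          show (wnn p q h ν n ω : ℝ) + f ω = (wnn p q h ν (n+1) ω : ℝ)
          rw [wnn_succ]
          simp only [hf]
          by_cases hc : wcross p q h ν n ω <;> simp [hc]

lemma Sst_le_bound (hsupp : ∀ x, 0 < q x → 0 < p x) (hh0 : 0 < h) (C : ℝ) (hC0 : 0 < C)
    (hCle : ∀ x, 0 < q x → Real.log (q x / p x) ≤ C)
    (ν n : ℕ) (ω : ℕ → X) (hω : ∀ j : ℕ, 0 < q (ω (ν + j))) :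
    Sq p q ν (wnn p q h ν n ω) ω ≤ h + C := by
  have hiff := fun k => wcross_iff_real p q h hsupp ν k ω hω
  by_cases hc : wcross p q h ν n ω
  · have hex : ∃ k, wcross p q h ν k ω := ⟨n, hc⟩
    have hfind : wnn p q h ν n ω = Nat.find hex := wnn_find p q h hc
    rw [hfind]
    set k0 := Nat.find hex with hk0
    have hspec : wcross p q h ν k0 ω := Nat.find_spec hex
    obtain ⟨m, h1m, hmk0, _⟩ := hspec
    have hk01 : 1 ≤ k0 := le_trans h1m hmk0
    have hSlt : Sq p q ν (k0 - 1) ω < h := by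
      rcases Nat.eq_zero_or_pos (k0 - 1) with h0 | h0
      · rw [h0]
        simpa [Sq] using hh0
      · have hnot : ¬ wcross p q h ν (k0 - 1) ω := Nat.find_min hex (by omega)
        rw [hiff (k0 - 1)] at hnot
        push_neg at hnot
        exact hnot (k0 - 1) h0 (le_refl _)
    have hk1 : k0 = (k0 - 1) + 1 := by omega
    rw [hk1]
    unfold Sq
    rw [Finset.sum_range_succ]
    have hlast : Real.log (q (ω (ν + (k0 - 1))) / p (ω (ν + (k0 - 1)))) ≤ C :=
      hCle _ (hω (k0 - 1))
    exact add_le_add hSlt.le hlast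
  · rw [wnn_of_not p q h hc]
    rcases Nat.eq_zero_or_pos n with h0 | h0
    · rw [h0]
      have : Sq p q ν 0 ω = 0 := by simp [Sq]
      rw [this]
      positivity
    · rw [hiff n] at hc
      push_neg at hc
      have hlt := hc n h0 (le_refl n)
      exact hlt.le.trans (le_add_of_nonneg_right hC0.le)

lemma tsub_le_iSup_wnn (ν : ℕ) (ω : ℕ → X) :
    ((Tstar p q h ω - (ν : ℕ∞)) : ℝ≥0∞) ≤ ⨆ n : ℕ, ((wnn p q h ν n ω : ℕ) : ℝ≥0∞) := by
  rw [← ENat.toENNReal_sub]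
  by_cases hex : ∃ k, wcross p q h ν k ω
  · set k0 := Nat.find hex with hk0
    have hspec : wcross p q h ν k0 ω := Nat.find_spec hex
    obtain ⟨m, h1m, hmk0, hsum⟩ := hspec
    have hTj : Tj p q h ν ω ≤ ((ν + m : ℕ) : ℕ∞) := by
      refine sInf_le (Set.mem_image_of_mem _ ?_)
      exact (⟨by omega, hsum⟩ : (ν + m) ∈ {n : ℕ | ν + 1 ≤ n ∧
        (h : EReal) ≤ ∑ i ∈ Finset.Ico ν n, llr p q (ω i)})
    have hT : Tstar p q h ω ≤ ((ν + m : ℕ) : ℕ∞) := (iInf_le _ ν).trans hTj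
    have hsub : Tstar p q h ω - (ν : ℕ∞) ≤ ((k0 : ℕ) : ℕ∞) := by
      refine tsub_le_iff_right.2 (hT.trans ?_)
      calc ((ν + m : ℕ) : ℕ∞) = (m : ℕ∞) + (ν : ℕ∞) := by push_cast; ring
        _ ≤ (k0 : ℕ∞) + (ν : ℕ∞) := by
            exact add_le_add_left (by exact_mod_cast hmk0) _
    refine le_trans ?_ (le_iSup (fun n => ((wnn p q h ν n ω : ℕ) : ℝ≥0∞)) k0)
    have hwnn : wnn p q h ν k0 ω = k0 := wnn_find p q h (Nat.find_spec hex)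
    rw [hwnn]
    have hfin := ENat.toENNReal_le.2 hsub
    rwa [ENat.toENNReal_coe] at hfin
  · push_neg at hex
    have hwnn : ∀ n, wnn p q h ν n ω = n := fun n => wnn_of_not p q h (hex n)
    have hsup : (⨆ n : ℕ, ((wnn p q h ν n ω : ℕ) : ℝ≥0∞)) = ⨆ n : ℕ, ((n : ℕ) : ℝ≥0∞) := by
      refine iSup_congr fun n => ?_
      rw [hwnn n]
    rw [hsup, ENNReal.iSup_natCast]
    exact le_top

lemma part2_bound (hp : IsPMF p) (hq : IsPMF q) (hsupp : ∀ x, 0 < q x → 0 < p x)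
    (hh0 : 0 < h) (hKL : 0 < KL q p) (C : ℝ) (hC0 : 0 < C)
    (hCle : ∀ x, 0 < q x → Real.log (q x / p x) ≤ C)
    (ν : ℕ) (P : Measure (ℕ → X)) [IsProbabilityMeasure P]
    (hP : HasLaw P (fun i => if i < ν then p else q))
    (A : Set (ℕ → X))
    (hAcoords : ∀ ω ω' : ℕ → X, (∀ i ∈ Finset.range ν, ω i = ω' i) → (ω ∈ A ↔ ω' ∈ A)) :
    ∫⁻ ω in A, ((Tstar p q h ω - (ν : ℕ∞)) : ℝ≥0∞) ∂P
      ≤ P A * ENNReal.ofReal ((h + C) / KL q p) := by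
  have hAmeas : MeasurableSet A := measurableSet_of_coords (Finset.range ν) A hAcoords
  have hGae : ∀ᵐ ω ∂P, ∀ j : ℕ, 0 < q (ω (ν + j)) := by
    rw [ae_all_iff]
    intro j
    rw [ae_iff]
    have hmap : P.map (fun ω : ℕ → X => ω (ν + j)) = pmfMeasure q := by
      have h2 := hP.2 (ν + j)
      have h3 : (if ν + j < ν then p else q) = q := if_neg (by omega)
      simp only [] at h2
      rwa [h3] at h2
    have : {ω : ℕ → X | ¬ 0 < q (ω (ν + j))} = {ω : ℕ → X | ω (ν + j) ∈ {x | ¬ 0 < q x}} := rfl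
    rw [this, prob_coord_mem P q (ν + j) hmap {x | ¬ 0 < q x}]
    refine Finset.sum_eq_zero fun x _ => ?_
    by_cases hx : x ∈ {x | ¬ 0 < q x}
    · rw [if_pos hx, ENNReal.ofReal_eq_zero.2 (not_lt.1 hx)]
    · rw [if_neg hx]
  have hwnnE_meas : ∀ n, Measurable (fun ω : ℕ → X => ((wnn p q h ν n ω : ℕ) : ℝ≥0∞)) := by
    intro n
    refine measurable_of_coords (Finset.Ico ν (ν + n)) _ ?_
    intro ω ω' ha
    rw [wnn_coords p q h ν n ω ω' ha]
  have hwnn_bound : ∀ n : ℕ, (∫⁻ ω, ((wnn p q h ν n ω : ℕ) : ℝ≥0∞) ∂P)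
      ≤ ENNReal.ofReal ((h + C) / KL q p) := by
    intro n
    have hwint : Integrable (fun ω => (wnn p q h ν n ω : ℝ)) P :=
      integrable_of_coords (Finset.Ico ν (ν + n)) _
        (fun ω ω' ha => by rw [wnn_coords p q h ν n ω ω' ha]) P
    have hSstint : Integrable (fun ω => Sq p q ν (wnn p q h ν n ω) ω) P :=
      integrable_of_coords (Finset.Ico ν (ν + n)) _ (Sst_coords p q h ν n) P
    have hwald := wald_identity p q h ν P hP hq n
    have hSb : ∫ ω, Sq p q ν (wnn p q h ν n ω) ω ∂P ≤ h + C := by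
      refine le_trans (integral_mono_ae hSstint (integrable_const (h + C))
        (hGae.mono fun ω hω => Sst_le_bound p q h hsupp hh0 C hC0 hCle ν n ω hω)) ?_
      rw [integral_const]
      simp
    have hib : ∫ ω, (wnn p q h ν n ω : ℝ) ∂P ≤ (h + C) / KL q p := by
      rw [le_div_iff₀ hKL]
      calc (∫ ω, (wnn p q h ν n ω : ℝ) ∂P) * KL q p
          = KL q p * ∫ ω, (wnn p q h ν n ω : ℝ) ∂P := by ring
        _ = ∫ ω, Sq p q ν (wnn p q h ν n ω) ω ∂P := hwald.symm
        _ ≤ h + C := hSb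
    calc ∫⁻ ω, ((wnn p q h ν n ω : ℕ) : ℝ≥0∞) ∂P
        = ∫⁻ ω, ENNReal.ofReal ((wnn p q h ν n ω : ℝ)) ∂P := by
          refine lintegral_congr fun ω => ?_
          rw [ENNReal.ofReal_natCast]
      _ = ENNReal.ofReal (∫ ω, (wnn p q h ν n ω : ℝ) ∂P) :=
          (ofReal_integral_eq_lintegral_ofReal hwint
            (Filter.Eventually.of_forall fun ω => Nat.cast_nonneg _)).symm
      _ ≤ ENNReal.ofReal ((h + C) / KL q p) := ENNReal.ofReal_le_ofReal hib
  have hdisj : ∀ n : ℕ, Disjoint (Finset.range ν) (Finset.Ico ν (ν + n)) := by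
    intro n
    rw [Finset.disjoint_left]
    intro i hi hi'
    have := Finset.mem_range.1 hi
    have := Finset.mem_Ico.1 hi'
    omega
  have hstep : ∀ n : ℕ, ∫⁻ ω in A, ((wnn p q h ν n ω : ℕ) : ℝ≥0∞) ∂P
      = P A * ∫⁻ ω, ((wnn p q h ν n ω : ℕ) : ℝ≥0∞) ∂P := by
    intro n
    set F : (ℕ → X) → ℝ≥0∞ := A.indicator (1 : (ℕ → X) → ℝ≥0∞) with hF
    have hFc : ∀ ω ω' : ℕ → X, (∀ i ∈ Finset.range ν, ω i = ω' i) → F ω = F ω' := by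
      intro ω ω' ha
      simp only [hF, Set.indicator]
      by_cases hω : ω ∈ A
      · rw [if_pos hω, if_pos ((hAcoords ω ω' ha).1 hω)]
        rfl
      · rw [if_neg hω, if_neg (fun hω' => hω ((hAcoords ω ω' ha).2 hω'))]
    have hFmeas : Measurable F := measurable_of_coords (Finset.range ν) F hFc
    have hindep : IndepFun F (fun ω => ((wnn p q h ν n ω : ℕ) : ℝ≥0∞)) P :=
      indepFun_of_coords P hP.1 (Finset.range ν) (Finset.Ico ν (ν + n)) (hdisj n) F _
        hFc (fun ω ω' ha => by rw [wnn_coords p q h ν n ω ω' ha])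
    calc ∫⁻ ω in A, ((wnn p q h ν n ω : ℕ) : ℝ≥0∞) ∂P
        = ∫⁻ ω, A.indicator (fun ω => ((wnn p q h ν n ω : ℕ) : ℝ≥0∞)) ω ∂P :=
          (lintegral_indicator hAmeas _).symm
      _ = ∫⁻ ω, (F * fun ω => ((wnn p q h ν n ω : ℕ) : ℝ≥0∞)) ω ∂P := by
          refine lintegral_congr fun ω => ?_
          simp only [hF, Set.indicator, Pi.mul_apply]
          by_cases hω : ω ∈ A
          · simp [hω]
          · simp [hω]
      _ = (∫⁻ ω, F ω ∂P) * ∫⁻ ω, ((wnn p q h ν n ω : ℕ) : ℝ≥0∞) ∂P :=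
          lintegral_mul_eq_lintegral_mul_lintegral_of_indepFun hFmeas (hwnnE_meas n) hindep
      _ = P A * ∫⁻ ω, ((wnn p q h ν n ω : ℕ) : ℝ≥0∞) ∂P := by
          rw [hF, lintegral_indicator_one hAmeas]
  calc ∫⁻ ω in A, ((Tstar p q h ω - (ν : ℕ∞)) : ℝ≥0∞) ∂P
      ≤ ∫⁻ ω in A, (⨆ n : ℕ, ((wnn p q h ν n ω : ℕ) : ℝ≥0∞)) ∂P :=
        lintegral_mono fun ω => tsub_le_iSup_wnn p q h ν ω
    _ = ⨆ n : ℕ, ∫⁻ ω in A, ((wnn p q h ν n ω : ℕ) : ℝ≥0∞) ∂P := by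
        rw [lintegral_iSup (fun n => hwnnE_meas n)]
        intro n n' hnn ω
        exact_mod_cast Nat.cast_le.2 (wnn_mono p q h ν ω hnn)
    _ ≤ ⨆ n : ℕ, P A * ENNReal.ofReal ((h + C) / KL q p) := by
        refine iSup_mono fun n => ?_
        rw [hstep n]
        exact mul_le_mul_right (hwnn_bound n) _
    _ = P A * ENNReal.ofReal ((h + C) / KL q p) := ciSup_const

end Part2

/-- **Classical achievability of the CUSUM trade-off.** Assume `supp q ⊆ supp p`,
`D := D(q‖p) > 0`, `α ∈ (0,1)` and `h := log (1/α)`.  Then the CUSUM stopping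
time `T*` with threshold `h` satisfies `E_∞[T*] ≥ 1/α`, and for every `ν ≥ 0`
and `x^ν` with `P_∞(T* > ν, X^ν = x^ν) > 0`,
`E_ν[T* − ν | T* > ν, X^ν = x^ν] ≤ (log(1/α) + C)/D`, where
`C = max_{x ∈ supp q} log (q x / p x)`. -/
theorem cusum_tradeoff_achievability
    [Fintype X] [Nonempty X] [MeasurableSpace X] [DiscreteMeasurableSpace X]
    (p q : X → ℝ) (hp : IsPMF p) (hq : IsPMF q)
    (hsupp : ∀ x, 0 < q x → 0 < p x)
    (D : ℝ) (hD : D = KL q p) (hDpos : 0 < D)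
    (α : ℝ) (hα0 : 0 < α) (hα1 : α < 1)
    (h : ℝ) (hh : h = Real.log (1 / α))
    (C : ℝ) (hC : C = sSup {y : ℝ | ∃ x, 0 < q x ∧ y = Real.log (q x / p x)})
    (Pinf : Measure (ℕ → X)) [IsProbabilityMeasure Pinf]
    (hPinf : HasLaw Pinf (fun _ => p))
    (Pc : ℕ → Measure (ℕ → X)) (hPcprob : ∀ ν, IsProbabilityMeasure (Pc ν))
    (hPc : ∀ ν, HasLaw (Pc ν) (fun i => if i < ν then p else q)) :
    ENNReal.ofReal (1 / α) ≤ ∫⁻ ω, (Tstar p q h ω : ℝ≥0∞) ∂Pinf ∧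
    ∀ (ν : ℕ) (xs : Fin ν → X),
      0 < Pinf {ω | (ν : ℕ∞) < Tstar p q h ω ∧ ∀ i : Fin ν, ω i = xs i} →
      (∫⁻ ω in {ω | (ν : ℕ∞) < Tstar p q h ω ∧ ∀ i : Fin ν, ω i = xs i},
          ((Tstar p q h ω - (ν : ℕ∞)) : ℝ≥0∞) ∂(Pc ν)) /
        Pc ν {ω | (ν : ℕ∞) < Tstar p q h ω ∧ ∀ i : Fin ν, ω i = xs i} ≤
        ENNReal.ofReal ((Real.log (1 / α) + C) / D) := by
  subst hh
  subst hD
  have hα' : (0 : ℝ) < 1 / α := by positivity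
  have hh0 : 0 < Real.log (1 / α) := Real.log_pos (one_lt_one_div hα0 hα1)
  have hCset_sub : {y : ℝ | ∃ x, 0 < q x ∧ y = Real.log (q x / p x)}
      ⊆ Set.range (fun x => Real.log (q x / p x)) := by
    rintro y ⟨x, _, rfl⟩
    exact ⟨x, rfl⟩
  have hbdd : BddAbove {y : ℝ | ∃ x, 0 < q x ∧ y = Real.log (q x / p x)} :=
    ((Set.finite_range _).subset hCset_sub).bddAbove
  have hCle : ∀ x, 0 < q x → Real.log (q x / p x) ≤ C := by
    intro x hx
    rw [hC]
    exact le_csSup hbdd ⟨x, hx, rfl⟩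
  have hfilter_sum : ∑ x ∈ Finset.univ.filter (fun x => 0 < q x), q x = 1 := by
    refine (Finset.sum_subset (Finset.filter_subset _ _) ?_).trans hq.2
    intro x _ hx
    simp only [Finset.mem_filter, Finset.mem_univ, true_and] at hx
    exact le_antisymm (not_lt.1 hx) (hq.1 x)
  have hDC : KL q p ≤ C := by
    rw [KL]
    calc ∑ x ∈ Finset.univ.filter (fun x => 0 < q x), q x * Real.log (q x / p x)
        ≤ ∑ x ∈ Finset.univ.filter (fun x => 0 < q x), q x * C := by
          refine Finset.sum_le_sum fun x hx => ?_
          exact mul_le_mul_of_nonneg_left (hCle x (Finset.mem_filter.1 hx).2) (hq.1 x)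
      _ = C := by rw [← Finset.sum_mul, hfilter_sum, one_mul]
  have hC0 : 0 < C := lt_of_lt_of_le hDpos hDC
  constructor
  · have hb := part1_bound p q (Real.log (1 / α)) Pinf hPinf hp hq hsupp
    rwa [Real.exp_log hα'] at hb
  · intro ν xs _hpos
    haveI := hPcprob ν
    set A := {ω : ℕ → X | (ν : ℕ∞) < Tstar p q (Real.log (1 / α)) ω
      ∧ ∀ i : Fin ν, ω i = xs i} with hA
    have hAcoords : ∀ ω ω' : ℕ → X, (∀ i ∈ Finset.range ν, ω i = ω' i) →
        (ω ∈ A ↔ ω' ∈ A) := by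
      intro ω ω' ha
      simp only [hA, Set.mem_setOf_eq]
      have h1 : ((ν : ℕ∞) < Tstar p q (Real.log (1 / α)) ω
          ↔ (ν : ℕ∞) < Tstar p q (Real.log (1 / α)) ω') := by
        rw [lt_Tstar_iff, lt_Tstar_iff]
        simp only [crossBy_coords p q (Real.log (1 / α)) ν ω ω' ha]
      have h2 : (∀ i : Fin ν, ω i = xs i) ↔ (∀ i : Fin ν, ω' i = xs i) := by
        constructor
        · intro hx i
          rw [← ha i (Finset.mem_range.2 i.isLt)]
          exact hx i
        · intro hx i
          rw [ha i (Finset.mem_range.2 i.isLt)]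
          exact hx i
      rw [h1, h2]
    have hkey := part2_bound p q (Real.log (1 / α)) hp hq hsupp hh0 hDpos C hC0 hCle ν
      (Pc ν) (hPc ν) A hAcoords
    exact ENNReal.div_le_of_le_mul (hkey.trans_eq (mul_comm _ _))


end QCPD
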